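/- Let G be a d-regular simple graph on V with exactly i red edges and let (v_0,…,v_7) be an 8-tuple valid for a 4-edge switching on G. Then the graph G' obtained by deleting the edges v_0v_1, v_2v_3, v_4v_5, v_6v_7 and adding the pairs v_0v_7, v_1v_2, v_3v_4, v_5v_6 as edges is a d-regular simple graph, and its number of red edges equals i − 1 − |{e ∈ {{v_2,v_3},{v_6,v_7}} : e is a red pair}| + |{e ∈ {{v_1,v_2},{v_0,v_7}} : e is a red pair}|. In particular, if v_1v_2, v_2v_3, v_0v_7, v_6v_7 are all black (a Class A switching), then G' has exactly i−1 red edges. -/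

import Mathlib

open SimpleGraph
open scoped Classical

/-- Distinctness of an 8-tuple, except that `v2 = v7` is allowed. -/
def Distinct8 {n : ℕ} (v0 v1 v2 v3 v4 v5 v6 v7 : Fin n) : Prop :=
  List.Pairwise (· ≠ ·) [v0, v1, v3, v4, v5, v6] ∧
  (∀ x ∈ [v0, v1, v3, v4, v5, v6], v2 ≠ x ∧ v7 ≠ x)

/-- An 8-tuple `(v0,…,v7)` is valid for a 4-edge switching on `G` (host graph `H`):
`v0v1` is a red edge of `G`; `v2v3`, `v4v5`, `v6v7` are edges of `G`;
`v0v7`, `v1v2`, `v3v4`, `v5v6` are not edges of `G`; none of `v3v4`, `v4v5`, `v5v6`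
is red; vertices distinct except `v2 = v7` allowed; and among the four pairs
`v1v2, v2v3, v0v7, v6v7` either none is red, or exactly one is red, or both `v1v2`
and `v2v3` are red while `v0v7` and `v6v7` are black, or both `v0v7` and `v6v7` are
red while `v1v2` and `v2v3` are black. -/
def Valid4Switch {n : ℕ} (H G : SimpleGraph (Fin n))
    (v0 v1 v2 v3 v4 v5 v6 v7 : Fin n) : Prop :=
  (G.Adj v0 v1 ∧ Hᶜ.Adj v0 v1) ∧
  G.Adj v2 v3 ∧ G.Adj v4 v5 ∧ G.Adj v6 v7 ∧
  ¬ G.Adj v0 v7 ∧ ¬ G.Adj v1 v2 ∧ ¬ G.Adj v3 v4 ∧ ¬ G.Adj v5 v6 ∧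
  ¬ Hᶜ.Adj v3 v4 ∧ ¬ Hᶜ.Adj v4 v5 ∧ ¬ Hᶜ.Adj v5 v6 ∧
  Distinct8 v0 v1 v2 v3 v4 v5 v6 v7 ∧
  ((¬ Hᶜ.Adj v1 v2 ∧ ¬ Hᶜ.Adj v2 v3 ∧ ¬ Hᶜ.Adj v0 v7 ∧ ¬ Hᶜ.Adj v6 v7) ∨
   (Hᶜ.Adj v1 v2 ∧ ¬ Hᶜ.Adj v2 v3 ∧ ¬ Hᶜ.Adj v0 v7 ∧ ¬ Hᶜ.Adj v6 v7) ∨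
   (¬ Hᶜ.Adj v1 v2 ∧ Hᶜ.Adj v2 v3 ∧ ¬ Hᶜ.Adj v0 v7 ∧ ¬ Hᶜ.Adj v6 v7) ∨
   (¬ Hᶜ.Adj v1 v2 ∧ ¬ Hᶜ.Adj v2 v3 ∧ Hᶜ.Adj v0 v7 ∧ ¬ Hᶜ.Adj v6 v7) ∨
   (¬ Hᶜ.Adj v1 v2 ∧ ¬ Hᶜ.Adj v2 v3 ∧ ¬ Hᶜ.Adj v0 v7 ∧ Hᶜ.Adj v6 v7) ∨
   (Hᶜ.Adj v1 v2 ∧ Hᶜ.Adj v2 v3 ∧ H.Adj v0 v7 ∧ H.Adj v6 v7) ∨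
   (Hᶜ.Adj v0 v7 ∧ Hᶜ.Adj v6 v7 ∧ H.Adj v1 v2 ∧ H.Adj v2 v3))

/-- The 4-edge switching: delete `v0v1, v2v3, v4v5, v6v7`; add `v0v7, v1v2, v3v4, v5v6`. -/
def Switch4 {n : ℕ} (G : SimpleGraph (Fin n))
    (v0 v1 v2 v3 v4 v5 v6 v7 : Fin n) : SimpleGraph (Fin n) :=
  G.deleteEdges {s(v0, v1), s(v2, v3), s(v4, v5), s(v6, v7)} ⊔
    SimpleGraph.fromEdgeSet {s(v0, v7), s(v1, v2), s(v3, v4), s(v5, v6)}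

lemma deg_swap1 {n : ℕ} (G G' : SimpleGraph (Fin n)) (v a b : Fin n)
    (ha : G.Adj v a) (hb : ¬ G.Adj v b)
    (h : ∀ y, G'.Adj v y ↔ (G.Adj v y ∧ y ≠ a) ∨ y = b) :
    G'.degree v = G.degree v := by
  have hE : G'.neighborFinset v = insert b ((G.neighborFinset v).erase a) := by
    ext y
    simp only [SimpleGraph.mem_neighborFinset, h, Finset.mem_insert, Finset.mem_erase]
    tauto
  have hbm : b ∉ (G.neighborFinset v).erase a := by
    simp [SimpleGraph.mem_neighborFinset, hb]
  have ham : a ∈ G.neighborFinset v := by simp [SimpleGraph.mem_neighborFinset, ha]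
  rw [SimpleGraph.degree, hE, Finset.card_insert_of_notMem hbm,
    Finset.card_erase_of_mem ham, SimpleGraph.degree]
  have : 1 ≤ (G.neighborFinset v).card := Finset.card_pos.mpr ⟨a, ham⟩
  omega

lemma deg_swap2 {n : ℕ} (G G' : SimpleGraph (Fin n)) (v a1 a2 b1 b2 : Fin n)
    (ha1 : G.Adj v a1) (ha2 : G.Adj v a2) (hb1 : ¬ G.Adj v b1) (hb2 : ¬ G.Adj v b2)
    (haa : a1 ≠ a2) (hbb : b1 ≠ b2)
    (h : ∀ y, G'.Adj v y ↔ (G.Adj v y ∧ y ≠ a1 ∧ y ≠ a2) ∨ y = b1 ∨ y = b2) :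
    G'.degree v = G.degree v := by
  have hE : G'.neighborFinset v =
      insert b1 (insert b2 (((G.neighborFinset v).erase a1).erase a2)) := by
    ext y
    simp only [SimpleGraph.mem_neighborFinset, h, Finset.mem_insert, Finset.mem_erase]
    tauto
  have ha1m : a1 ∈ G.neighborFinset v := by simp [SimpleGraph.mem_neighborFinset, ha1]
  have ha2m : a2 ∈ (G.neighborFinset v).erase a1 := by
    simp [SimpleGraph.mem_neighborFinset, ha2, haa.symm]
  have hb2m : b2 ∉ ((G.neighborFinset v).erase a1).erase a2 := by
    simp [SimpleGraph.mem_neighborFinset, hb2]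
  have hb1m : b1 ∉ insert b2 (((G.neighborFinset v).erase a1).erase a2) := by
    simp [SimpleGraph.mem_neighborFinset, hb1, hbb]
  rw [SimpleGraph.degree, hE, Finset.card_insert_of_notMem hb1m,
    Finset.card_insert_of_notMem hb2m, Finset.card_erase_of_mem ha2m,
    Finset.card_erase_of_mem ha1m, SimpleGraph.degree]
  have h1 : 1 ≤ (G.neighborFinset v).card := Finset.card_pos.mpr ⟨a1, ha1m⟩
  have h2 : 2 ≤ (G.neighborFinset v).card := by
    have := Finset.card_erase_of_mem ha1m ▸ Finset.card_pos.mpr ⟨a2, ha2m⟩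
    omega
  omega

lemma deg_same {n : ℕ} (G G' : SimpleGraph (Fin n)) (v : Fin n)
    (h : ∀ y, G'.Adj v y ↔ G.Adj v y) : G'.degree v = G.degree v := by
  unfold SimpleGraph.degree
  congr 1
  ext y
  simp [SimpleGraph.mem_neighborFinset, h]


set_option maxHeartbeats 1000000 in
/-- A 4-edge switching applied to a `d`-regular graph `G` with exactly
`i` red edges produces a `d`-regular graph `G'` whose number of red edges is
`i − 1 − #{red pairs among {v2v3, v6v7}} + #{red pairs among {v1v2, v0v7}}`; in
particular, if `v1v2, v2v3, v0v7, v6v7` are all black (Class A), `G'` has exactly `i-1`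
red edges. -/
theorem stmt_9 (n d i : ℕ) (H G : SimpleGraph (Fin n))
    (hreg : G.IsRegularOfDegree d)
    (hred : (G ⊓ Hᶜ).edgeSet.ncard = i)
    (v0 v1 v2 v3 v4 v5 v6 v7 : Fin n)
    (hv : Valid4Switch H G v0 v1 v2 v3 v4 v5 v6 v7) :
    (Switch4 G v0 v1 v2 v3 v4 v5 v6 v7).IsRegularOfDegree d ∧
    (((Switch4 G v0 v1 v2 v3 v4 v5 v6 v7) ⊓ Hᶜ).edgeSet.ncard : ℤ) =
      (i : ℤ) - 1
        - ((if Hᶜ.Adj v2 v3 then 1 else 0) + (if Hᶜ.Adj v6 v7 then 1 else 0))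
        + ((if Hᶜ.Adj v1 v2 then 1 else 0) + (if Hᶜ.Adj v0 v7 then 1 else 0)) ∧
    (H.Adj v1 v2 → H.Adj v2 v3 → H.Adj v0 v7 → H.Adj v6 v7 →
      (((Switch4 G v0 v1 v2 v3 v4 v5 v6 v7) ⊓ Hᶜ).edgeSet.ncard : ℤ) =
        (i : ℤ) - 1) := by
  obtain ⟨⟨a01, r01⟩, a23, a45, a67, na07, na12, na34, na56, nr34, nr45, nr56, hd, hcases⟩ := hv
  obtain ⟨hp, hq⟩ := hd
  simp only [List.pairwise_cons, List.mem_cons, List.mem_singleton, List.not_mem_nil,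
    List.Pairwise.nil, forall_eq_or_imp, forall_eq] at hp
  obtain ⟨⟨n01, n03, n04, n05, n06⟩, ⟨n13, n14, n15, n16⟩, ⟨n34, n35, n36⟩, ⟨n45, n46⟩, n56, -⟩ := hp
  replace n06 := n06.1
  replace n16 := n16.1
  replace n36 := n36.1
  replace n46 := n46.1
  replace n56 := n56.1
  have n20 := (hq v0 (by simp)).1
  have n70 := (hq v0 (by simp)).2
  have n21 := (hq v1 (by simp)).1
  have n71 := (hq v1 (by simp)).2
  have n23 := (hq v3 (by simp)).1
  have n73 := (hq v3 (by simp)).2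
  have n24 := (hq v4 (by simp)).1
  have n74 := (hq v4 (by simp)).2
  have n25 := (hq v5 (by simp)).1
  have n75 := (hq v5 (by simp)).2
  have n26 := (hq v6 (by simp)).1
  have n76 := (hq v6 (by simp)).2
  set G' := Switch4 G v0 v1 v2 v3 v4 v5 v6 v7 with hG'
  -- Part 1: regularity
  have part1 : G'.IsRegularOfDegree d := by
    clear hcases hq hred
    intro x
    rw [show G'.degree x = G.degree x from ?_, hreg x]
    by_cases hx0 : x = v0
    · subst hx0
      refine deg_swap1 G G' x v1 v7 a01 na07 ?_
      intro y
      simp only [hG', Switch4, SimpleGraph.sup_adj, SimpleGraph.deleteEdges_adj,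
        SimpleGraph.fromEdgeSet_adj, Set.mem_insert_iff, Set.mem_singleton_iff, Sym2.eq_iff]
      simp [n01, n03, n04, n05, n06, n20, n70, n21, n71, n23, n73, n24, n74, n25, n75,
        n26, n76, n01.symm, n03.symm, n04.symm, n05.symm, n06.symm, n20.symm, n70.symm]
      aesop
    by_cases hx1 : x = v1
    · subst hx1
      refine deg_swap1 G G' x v0 v2 a01.symm na12 ?_
      intro y
      simp only [hG', Switch4, SimpleGraph.sup_adj, SimpleGraph.deleteEdges_adj,
        SimpleGraph.fromEdgeSet_adj, Set.mem_insert_iff, Set.mem_singleton_iff, Sym2.eq_iff]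
      simp [n01, n13, n14, n15, n16, n21, n71, n01.symm, n13.symm, n14.symm, n15.symm,
        n16.symm, n21.symm, n71.symm]
      aesop
    by_cases hx3 : x = v3
    · subst hx3
      refine deg_swap1 G G' x v2 v4 a23.symm na34 ?_
      intro y
      simp only [hG', Switch4, SimpleGraph.sup_adj, SimpleGraph.deleteEdges_adj,
        SimpleGraph.fromEdgeSet_adj, Set.mem_insert_iff, Set.mem_singleton_iff, Sym2.eq_iff]
      simp [n03, n13, n34, n35, n36, n23, n73, n03.symm, n13.symm, n34.symm, n35.symm,
        n36.symm, n23.symm, n73.symm]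
      aesop
    by_cases hx4 : x = v4
    · subst hx4
      refine deg_swap1 G G' x v5 v3 a45 (fun h => na34 h.symm) ?_
      intro y
      simp only [hG', Switch4, SimpleGraph.sup_adj, SimpleGraph.deleteEdges_adj,
        SimpleGraph.fromEdgeSet_adj, Set.mem_insert_iff, Set.mem_singleton_iff, Sym2.eq_iff]
      simp [n04, n14, n34, n45, n46, n24, n74, n04.symm, n14.symm, n34.symm, n45.symm,
        n46.symm, n24.symm, n74.symm]
      aesop
    by_cases hx5 : x = v5
    · subst hx5
      refine deg_swap1 G G' x v4 v6 a45.symm na56 ?_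
      intro y
      simp only [hG', Switch4, SimpleGraph.sup_adj, SimpleGraph.deleteEdges_adj,
        SimpleGraph.fromEdgeSet_adj, Set.mem_insert_iff, Set.mem_singleton_iff, Sym2.eq_iff]
      simp [n05, n15, n35, n45, n56, n25, n75, n05.symm, n15.symm, n35.symm, n45.symm,
        n56.symm, n25.symm, n75.symm]
      aesop
    by_cases hx6 : x = v6
    · subst hx6
      refine deg_swap1 G G' x v7 v5 a67 (fun h => na56 h.symm) ?_
      intro y
      simp only [hG', Switch4, SimpleGraph.sup_adj, SimpleGraph.deleteEdges_adj,
        SimpleGraph.fromEdgeSet_adj, Set.mem_insert_iff, Set.mem_singleton_iff, Sym2.eq_iff]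
      simp [n06, n16, n36, n46, n56, n26, n76, n06.symm, n16.symm, n36.symm, n46.symm,
        n56.symm, n26.symm, n76.symm]
      aesop
    by_cases hx2 : x = v2
    · subst hx2
      by_cases h27 : x = v7
      · -- x = v2 = v7 : remove v3, v6; add v1, v0
        subst h27
        refine deg_swap2 G G' x v3 v6 v1 v0 a23 a67.symm
          (fun h => na12 h.symm) (fun h => na07 h.symm) n36 n01.symm ?_
        intro y
        simp only [hG', Switch4, SimpleGraph.sup_adj, SimpleGraph.deleteEdges_adj,
          SimpleGraph.fromEdgeSet_adj, Set.mem_insert_iff, Set.mem_singleton_iff, Sym2.eq_iff]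
        simp [n20, n21, n23, n24, n25, n26, n20.symm, n21.symm, n23.symm, n24.symm,
          n25.symm, n26.symm]
        aesop
      · -- x = v2 ≠ v7 : remove v3, add v1
        refine deg_swap1 G G' x v3 v1 a23 (fun h => na12 h.symm) ?_
        intro y
        simp only [hG', Switch4, SimpleGraph.sup_adj, SimpleGraph.deleteEdges_adj,
          SimpleGraph.fromEdgeSet_adj, Set.mem_insert_iff, Set.mem_singleton_iff, Sym2.eq_iff]
        simp [n20, n21, n23, n24, n25, n26, h27, n20.symm, n21.symm, n23.symm, n24.symm,
          n25.symm, n26.symm]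
        aesop
    by_cases hx7 : x = v7
    · subst hx7
      have h72 : x ≠ v2 := hx2
      refine deg_swap1 G G' x v6 v0 a67.symm (fun h => na07 h.symm) ?_
      intro y
      simp only [hG', Switch4, SimpleGraph.sup_adj, SimpleGraph.deleteEdges_adj,
        SimpleGraph.fromEdgeSet_adj, Set.mem_insert_iff, Set.mem_singleton_iff, Sym2.eq_iff]
      simp [n70, n71, n73, n74, n75, n76, h72, n70.symm, n71.symm, n73.symm, n74.symm,
        n75.symm, n76.symm]
      aesop
    · -- generic vertex
      refine deg_same G G' x ?_
      intro y
      simp only [hG', Switch4, SimpleGraph.sup_adj, SimpleGraph.deleteEdges_adj,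
        SimpleGraph.fromEdgeSet_adj, Set.mem_insert_iff, Set.mem_singleton_iff, Sym2.eq_iff]
      simp [hx0, hx1, hx2, hx3, hx4, hx5, hx6, hx7]
  -- Part 2: red edge count
  clear hcases hq
  set D : Set (Sym2 (Fin n)) := {s(v0, v1), s(v2, v3), s(v4, v5), s(v6, v7)} with hD
  set A : Set (Sym2 (Fin n)) := {s(v0, v7), s(v1, v2), s(v3, v4), s(v5, v6)} with hA
  set R : Set (Sym2 (Fin n)) := (G ⊓ Hᶜ).edgeSet with hR
  have hAd : A \ {e | e.IsDiag} = A := by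
    ext e
    simp only [Set.mem_diff, Set.mem_setOf_eq, and_iff_left_iff_imp, hA,
      Set.mem_insert_iff, Set.mem_singleton_iff]
    rintro (rfl | rfl | rfl | rfl) <;>
      simp [Sym2.mk_isDiag_iff, n70.symm, n21.symm, n34, n56]
  have hE : G'.edgeSet = (G.edgeSet \ D) ∪ A := by
    rw [hG', Switch4, edgeSet_sup, edgeSet_deleteEdges, edgeSet_fromEdgeSet, Sym2.diagSet, hAd]
  have hRR : R = G.edgeSet ∩ Hᶜ.edgeSet := by rw [hR, edgeSet_inf]
  have hR' : (G' ⊓ Hᶜ).edgeSet = (R \ D) ∪ (A ∩ Hᶜ.edgeSet) := by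
    rw [edgeSet_inf, hE, hRR]
    ext e
    simp only [Set.mem_union, Set.mem_diff, Set.mem_inter_iff]
    tauto
  have hAnG : ∀ e ∈ A, e ∉ G.edgeSet := by
    intro e he
    simp only [hA, Set.mem_insert_iff, Set.mem_singleton_iff] at he
    rcases he with rfl | rfl | rfl | rfl <;> simp [mem_edgeSet] <;> assumption
  have hdisj : Disjoint (R \ D) (A ∩ Hᶜ.edgeSet) := by
    rw [Set.disjoint_left]
    rintro e ⟨heR, -⟩ ⟨heA, -⟩
    exact hAnG e heA (hRR ▸ heR).1
  have hRsub : R ∩ D ⊆ R := Set.inter_subset_left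
  have hle : (R ∩ D).ncard ≤ i := hred ▸ Set.ncard_le_ncard hRsub R.toFinite
  have hcard : ((G' ⊓ Hᶜ).edgeSet.ncard : ℤ) =
      (i : ℤ) - ((R ∩ D).ncard : ℤ) + ((A ∩ Hᶜ.edgeSet).ncard : ℤ) := by
    rw [hR', Set.ncard_union_eq hdisj (R \ D).toFinite (A ∩ Hᶜ.edgeSet).toFinite,
      ← Set.diff_self_inter, Set.ncard_diff hRsub (R ∩ D).toFinite, hred]
    push_cast [Nat.cast_sub hle]
    ring
  -- membership facts
  have m01 : s(v0, v1) ∈ R := by rw [hRR]; exact ⟨a01, r01⟩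
  have m23 : s(v2, v3) ∈ R ↔ Hᶜ.Adj v2 v3 := by
    rw [hRR]; simp [mem_edgeSet, a23]
  have m67 : s(v6, v7) ∈ R ↔ Hᶜ.Adj v6 v7 := by
    rw [hRR]; simp [mem_edgeSet, a67]
  have m45 : s(v4, v5) ∉ R := by
    rw [hRR]; simp [mem_edgeSet, nr45]
  have ne0123 : s(v0, v1) ≠ s(v2, v3) := by
    rw [Ne, Sym2.eq_iff]
    rintro (⟨h, -⟩ | ⟨h, -⟩)
    · exact n20 h.symm
    · exact n03 h
  have ne0167 : s(v0, v1) ≠ s(v6, v7) := by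
    rw [Ne, Sym2.eq_iff]
    rintro (⟨h, -⟩ | ⟨h, -⟩)
    · exact n06 h
    · exact n70 h.symm
  have ne2367 : s(v2, v3) ≠ s(v6, v7) := by
    rw [Ne, Sym2.eq_iff]
    rintro (⟨h, -⟩ | ⟨-, h⟩)
    · exact n26 h
    · exact n36 h
  have ne0712 : s(v0, v7) ≠ s(v1, v2) := by
    rw [Ne, Sym2.eq_iff]
    rintro (⟨h, -⟩ | ⟨h, -⟩)
    · exact n01 h
    · exact n20 h.symm
  have hRD : ((R ∩ D).ncard : ℤ) =
      1 + (if Hᶜ.Adj v2 v3 then 1 else 0) + (if Hᶜ.Adj v6 v7 then 1 else 0) := by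
    by_cases h23 : Hᶜ.Adj v2 v3 <;> by_cases h67 : Hᶜ.Adj v6 v7
    · have hset : R ∩ D = {s(v0, v1), s(v2, v3), s(v6, v7)} := by
        ext e
        simp only [Set.mem_inter_iff, hD, Set.mem_insert_iff, Set.mem_singleton_iff]
        constructor
        · rintro ⟨hr, rfl | rfl | rfl | rfl⟩
          · exact Or.inl rfl
          · exact Or.inr (Or.inl rfl)
          · exact absurd hr m45
          · exact Or.inr (Or.inr rfl)
        · rintro (rfl | rfl | rfl)
          · exact ⟨m01, Or.inl rfl⟩
          · exact ⟨m23.mpr h23, Or.inr (Or.inl rfl)⟩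
          · exact ⟨m67.mpr h67, Or.inr (Or.inr (Or.inr rfl))⟩
      rw [hset, if_pos h23, if_pos h67,
        Set.ncard_insert_of_notMem (by simp [ne0123, ne0167]),
        Set.ncard_pair ne2367]
      norm_num
    · have hset : R ∩ D = {s(v0, v1), s(v2, v3)} := by
        ext e
        simp only [Set.mem_inter_iff, hD, Set.mem_insert_iff, Set.mem_singleton_iff]
        constructor
        · rintro ⟨hr, rfl | rfl | rfl | rfl⟩
          · exact Or.inl rfl
          · exact Or.inr rfl
          · exact absurd hr m45
          · exact absurd (m67.mp hr) h67
        · rintro (rfl | rfl)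
          · exact ⟨m01, Or.inl rfl⟩
          · exact ⟨m23.mpr h23, Or.inr (Or.inl rfl)⟩
      rw [hset, if_pos h23, if_neg h67, Set.ncard_pair ne0123]
      norm_num
    · have hset : R ∩ D = {s(v0, v1), s(v6, v7)} := by
        ext e
        simp only [Set.mem_inter_iff, hD, Set.mem_insert_iff, Set.mem_singleton_iff]
        constructor
        · rintro ⟨hr, rfl | rfl | rfl | rfl⟩
          · exact Or.inl rfl
          · exact absurd (m23.mp hr) h23
          · exact absurd hr m45
          · exact Or.inr rfl
        · rintro (rfl | rfl)
          · exact ⟨m01, Or.inl rfl⟩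
          · exact ⟨m67.mpr h67, Or.inr (Or.inr (Or.inr rfl))⟩
      rw [hset, if_neg h23, if_pos h67, Set.ncard_pair ne0167]
      norm_num
    · have hset : R ∩ D = {s(v0, v1)} := by
        ext e
        simp only [Set.mem_inter_iff, hD, Set.mem_insert_iff, Set.mem_singleton_iff]
        constructor
        · rintro ⟨hr, rfl | rfl | rfl | rfl⟩
          · exact rfl
          · exact absurd (m23.mp hr) h23
          · exact absurd hr m45
          · exact absurd (m67.mp hr) h67
        · rintro rfl
          exact ⟨m01, Or.inl rfl⟩
      rw [hset, if_neg h23, if_neg h67, Set.ncard_singleton]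
      norm_num
  have q07 : s(v0, v7) ∈ Hᶜ.edgeSet ↔ Hᶜ.Adj v0 v7 := SimpleGraph.mem_edgeSet Hᶜ
  have q12 : s(v1, v2) ∈ Hᶜ.edgeSet ↔ Hᶜ.Adj v1 v2 := SimpleGraph.mem_edgeSet Hᶜ
  have q34 : s(v3, v4) ∉ Hᶜ.edgeSet := fun h => nr34 ((SimpleGraph.mem_edgeSet Hᶜ).mp h)
  have q56 : s(v5, v6) ∉ Hᶜ.edgeSet := fun h => nr56 ((SimpleGraph.mem_edgeSet Hᶜ).mp h)
  have hAR : ((A ∩ Hᶜ.edgeSet).ncard : ℤ) =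
      (if Hᶜ.Adj v1 v2 then 1 else 0) + (if Hᶜ.Adj v0 v7 then 1 else 0) := by
    by_cases h12 : Hᶜ.Adj v1 v2 <;> by_cases h07 : Hᶜ.Adj v0 v7
    · have hset : A ∩ Hᶜ.edgeSet = {s(v0, v7), s(v1, v2)} := by
        ext e
        simp only [Set.mem_inter_iff, hA, Set.mem_insert_iff, Set.mem_singleton_iff]
        constructor
        · rintro ⟨rfl | rfl | rfl | rfl, hr⟩
          · exact Or.inl rfl
          · exact Or.inr rfl
          · exact absurd hr q34
          · exact absurd hr q56
        · rintro (rfl | rfl)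
          · exact ⟨Or.inl rfl, q07.mpr h07⟩
          · exact ⟨Or.inr (Or.inl rfl), q12.mpr h12⟩
      rw [hset, if_pos h12, if_pos h07, Set.ncard_pair ne0712]
      norm_num
    · have hset : A ∩ Hᶜ.edgeSet = {s(v1, v2)} := by
        ext e
        simp only [Set.mem_inter_iff, hA, Set.mem_insert_iff, Set.mem_singleton_iff]
        constructor
        · rintro ⟨rfl | rfl | rfl | rfl, hr⟩
          · exact absurd (q07.mp hr) h07
          · exact rfl
          · exact absurd hr q34
          · exact absurd hr q56
        · rintro rfl
          exact ⟨Or.inr (Or.inl rfl), q12.mpr h12⟩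
      rw [hset, if_pos h12, if_neg h07, Set.ncard_singleton]
      norm_num
    · have hset : A ∩ Hᶜ.edgeSet = {s(v0, v7)} := by
        ext e
        simp only [Set.mem_inter_iff, hA, Set.mem_insert_iff, Set.mem_singleton_iff]
        constructor
        · rintro ⟨rfl | rfl | rfl | rfl, hr⟩
          · exact rfl
          · exact absurd (q12.mp hr) h12
          · exact absurd hr q34
          · exact absurd hr q56
        · rintro rfl
          exact ⟨Or.inl rfl, q07.mpr h07⟩
      rw [hset, if_neg h12, if_pos h07, Set.ncard_singleton]
      norm_num
    · have hset : A ∩ Hᶜ.edgeSet = ∅ := by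
        ext e
        simp only [Set.mem_inter_iff, hA, Set.mem_insert_iff, Set.mem_singleton_iff,
          Set.mem_empty_iff_false, iff_false, not_and]
        rintro (rfl | rfl | rfl | rfl) hr
        · exact h07 (q07.mp hr)
        · exact h12 (q12.mp hr)
        · exact q34 hr
        · exact q56 hr
      rw [hset, if_neg h12, if_neg h07, Set.ncard_empty]
      norm_num
  have part2 : ((G' ⊓ Hᶜ).edgeSet.ncard : ℤ) =
      (i : ℤ) - 1
        - ((if Hᶜ.Adj v2 v3 then 1 else 0) + (if Hᶜ.Adj v6 v7 then 1 else 0))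
        + ((if Hᶜ.Adj v1 v2 then 1 else 0) + (if Hᶜ.Adj v0 v7 then 1 else 0)) := by
    rw [hcard, hRD, hAR]; ring
  refine ⟨part1, part2, ?_⟩
  intro h12 h23 h07 h67
  have b12 : ¬ Hᶜ.Adj v1 v2 := by simp [SimpleGraph.compl_adj]; tauto
  have b23 : ¬ Hᶜ.Adj v2 v3 := by simp [SimpleGraph.compl_adj]; tauto
  have b07 : ¬ Hᶜ.Adj v0 v7 := by simp [SimpleGraph.compl_adj]; tauto
  have b67 : ¬ Hᶜ.Adj v6 v7 := by simp [SimpleGraph.compl_adj]; tauto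
  rw [part2, if_neg b12, if_neg b23, if_neg b07, if_neg b67]
  ring
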